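/- Define H₁, H₂, H₃ : ℝ⁶ → ℝ on coordinates (q₁, q₂, q₃, p₁, p₂, p₃) by H₁ = 2p₁p₃ + p₂² + 2q₁p₂p₃ + q₂p₃² - q₁⁴ + 3q₁²q₂ - 2q₁q₃ - q₂², H₂ = 2q₁p₁p₃ + 2q₁p₂² + 2p₁p₂ + (q₁q₂ - q₃)p₃² + 2q₁²p₂p₃ - q₁³q₂ + q₁²q₃ + 2q₁q₂² - 2q₂q₃, and H₃ = p₁² + 2q₁p₁p₂ + 2q₂p₁p₃ + q₁²p₂² + (q₂² - q₁q₃)p₃² + 2(q₁q₂ - q₃)p₂p₃ - q₁³q₃ + 2q₁q₂q₃ - q₃². Then the canonical Poisson brackets {H₁,H₂}, {H₁,H₃}, {H₂,H₃} vanish identically on ℝ⁶, where {F,G} = ∑_{i=1}^{3} (∂F/∂q_i ∂G/∂p_i - ∂F/∂p_i ∂G/∂q_i). -/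

import Mathlib

/-- The Stäckel Hamiltonian `H₁` for n = 3 in Viète coordinates. -/
def H₁n3 (q₁ q₂ q₃ p₁ p₂ p₃ : ℝ) : ℝ :=
  2 * p₁ * p₃ + p₂ ^ 2 + 2 * q₁ * p₂ * p₃ + q₂ * p₃ ^ 2
    - q₁ ^ 4 + 3 * q₁ ^ 2 * q₂ - 2 * q₁ * q₃ - q₂ ^ 2

/-- The Stäckel Hamiltonian `H₂` for n = 3 in Viète coordinates. -/
def H₂n3 (q₁ q₂ q₃ p₁ p₂ p₃ : ℝ) : ℝ :=
  2 * q₁ * p₁ * p₃ + 2 * q₁ * p₂ ^ 2 + 2 * p₁ * p₂ + (q₁ * q₂ - q₃) * p₃ ^ 2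
    + 2 * q₁ ^ 2 * p₂ * p₃ - q₁ ^ 3 * q₂ + q₁ ^ 2 * q₃ + 2 * q₁ * q₂ ^ 2 - 2 * q₂ * q₃

/-- The Stäckel Hamiltonian `H₃` for n = 3 in Viète coordinates. -/
def H₃n3 (q₁ q₂ q₃ p₁ p₂ p₃ : ℝ) : ℝ :=
  p₁ ^ 2 + 2 * q₁ * p₁ * p₂ + 2 * q₂ * p₁ * p₃ + q₁ ^ 2 * p₂ ^ 2
    + (q₂ ^ 2 - q₁ * q₃) * p₃ ^ 2 + 2 * (q₁ * q₂ - q₃) * p₂ * p₃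
    - q₁ ^ 3 * q₃ + 2 * q₁ * q₂ * q₃ - q₃ ^ 2

/-- The canonical Poisson bracket on `ℝ⁶`, `{F,G} = ∑ᵢ (∂F/∂qᵢ ∂G/∂pᵢ - ∂F/∂pᵢ ∂G/∂qᵢ)`. -/
noncomputable def pb3 (F G : ℝ → ℝ → ℝ → ℝ → ℝ → ℝ → ℝ) (q₁ q₂ q₃ p₁ p₂ p₃ : ℝ) : ℝ :=
  deriv (fun x => F x q₂ q₃ p₁ p₂ p₃) q₁ * deriv (fun x => G q₁ q₂ q₃ x p₂ p₃) p₁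
    - deriv (fun x => F q₁ q₂ q₃ x p₂ p₃) p₁ * deriv (fun x => G x q₂ q₃ p₁ p₂ p₃) q₁
    + deriv (fun x => F q₁ x q₃ p₁ p₂ p₃) q₂ * deriv (fun x => G q₁ q₂ q₃ p₁ x p₃) p₂
    - deriv (fun x => F q₁ q₂ q₃ p₁ x p₃) p₂ * deriv (fun x => G q₁ x q₃ p₁ p₂ p₃) q₂
    + deriv (fun x => F q₁ q₂ x p₁ p₂ p₃) q₃ * deriv (fun x => G q₁ q₂ q₃ p₁ p₂ x) p₃
    - deriv (fun x => F q₁ q₂ q₃ p₁ p₂ x) p₃ * deriv (fun x => G q₁ q₂ x p₁ p₂ p₃) q₃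


private lemma dp (a b c d e x : ℝ) :
    deriv (fun y : ℝ => a*y^4 + b*y^3 + c*y^2 + d*y + e) x
      = 4*a*x^3 + 3*b*x^2 + 2*c*x + d := by
  have h := (((hasDerivAt_pow 4 x).const_mul a).add
      ((((hasDerivAt_pow 3 x).const_mul b)).add
        ((((hasDerivAt_pow 2 x).const_mul c)).add
          (((hasDerivAt_id x).const_mul d).add (hasDerivAt_const x e)))))
  rw [show (fun y : ℝ => a*y^4 + b*y^3 + c*y^2 + d*y + e)
      = (fun y : ℝ => a*y^4 + (b*y^3 + (c*y^2 + (d*(id y) + e)))) from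
    funext fun y => by simp only [id]; ring, show deriv (fun y : ℝ => a*y^4 + (b*y^3 + (c*y^2 + (d*(id y) + e)))) x = _ from h.deriv]
  push_cast; ring

/-- The three Stäckel Hamiltonians for n = 3 are pairwise in involution with
respect to the canonical Poisson bracket on `ℝ⁶`. -/
theorem poisson_bracket_n3 (q₁ q₂ q₃ p₁ p₂ p₃ : ℝ) :
    pb3 H₁n3 H₂n3 q₁ q₂ q₃ p₁ p₂ p₃ = 0
      ∧ pb3 H₁n3 H₃n3 q₁ q₂ q₃ p₁ p₂ p₃ = 0
      ∧ pb3 H₂n3 H₃n3 q₁ q₂ q₃ p₁ p₂ p₃ = 0 := by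
  have d₁0 : deriv (fun x => H₁n3 x q₂ q₃ p₁ p₂ p₃) q₁ = (2*p₂*p₃ + (-2)*q₃ + 6*q₁*q₂ + (-4)*q₁^3) := by
    rw [show (fun x => H₁n3 x q₂ q₃ p₁ p₂ p₃) = (fun y => ((-1))*y^4 + 0*y^3 + (3*q₂)*y^2 + (2*p₂*p₃ + (-2)*q₃)*y + (p₂^2 + 2*p₁*p₃ + q₂*p₃^2 + (-1)*q₂^2)) from funext fun y => by simp only [H₁n3]; ring, dp]
    ring
  have d₁1 : deriv (fun x => H₁n3 q₁ x q₃ p₁ p₂ p₃) q₂ = (p₃^2 + (-2)*q₂ + 3*q₁^2) := by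
    rw [show (fun x => H₁n3 q₁ x q₃ p₁ p₂ p₃) = (fun y => 0*y^4 + 0*y^3 + ((-1))*y^2 + (p₃^2 + 3*q₁^2)*y + (p₂^2 + 2*p₁*p₃ + 2*q₁*p₂*p₃ + (-2)*q₁*q₃ + (-1)*q₁^4)) from funext fun y => by simp only [H₁n3]; ring, dp]
    ring
  have d₁2 : deriv (fun x => H₁n3 q₁ q₂ x p₁ p₂ p₃) q₃ = ((-2)*q₁) := by
    rw [show (fun x => H₁n3 q₁ q₂ x p₁ p₂ p₃) = (fun y => 0*y^4 + 0*y^3 + 0*y^2 + ((-2)*q₁)*y + (p₂^2 + 2*p₁*p₃ + q₂*p₃^2 + (-1)*q₂^2 + 2*q₁*p₂*p₃ + 3*q₁^2*q₂ + (-1)*q₁^4)) from funext fun y => by simp only [H₁n3]; ring, dp]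
    ring
  have d₁3 : deriv (fun x => H₁n3 q₁ q₂ q₃ x p₂ p₃) p₁ = (2*p₃) := by
    rw [show (fun x => H₁n3 q₁ q₂ q₃ x p₂ p₃) = (fun y => 0*y^4 + 0*y^3 + 0*y^2 + (2*p₃)*y + (p₂^2 + q₂*p₃^2 + (-1)*q₂^2 + 2*q₁*p₂*p₃ + (-2)*q₁*q₃ + 3*q₁^2*q₂ + (-1)*q₁^4)) from funext fun y => by simp only [H₁n3]; ring, dp]
    ring
  have d₁4 : deriv (fun x => H₁n3 q₁ q₂ q₃ p₁ x p₃) p₂ = (2*p₂ + 2*q₁*p₃) := by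
    rw [show (fun x => H₁n3 q₁ q₂ q₃ p₁ x p₃) = (fun y => 0*y^4 + 0*y^3 + (1)*y^2 + (2*q₁*p₃)*y + (2*p₁*p₃ + q₂*p₃^2 + (-1)*q₂^2 + (-2)*q₁*q₃ + 3*q₁^2*q₂ + (-1)*q₁^4)) from funext fun y => by simp only [H₁n3]; ring, dp]
    ring
  have d₁5 : deriv (fun x => H₁n3 q₁ q₂ q₃ p₁ p₂ x) p₃ = (2*p₁ + 2*q₂*p₃ + 2*q₁*p₂) := by
    rw [show (fun x => H₁n3 q₁ q₂ q₃ p₁ p₂ x) = (fun y => 0*y^4 + 0*y^3 + (q₂)*y^2 + (2*p₁ + 2*q₁*p₂)*y + (p₂^2 + (-1)*q₂^2 + (-2)*q₁*q₃ + 3*q₁^2*q₂ + (-1)*q₁^4)) from funext fun y => by simp only [H₁n3]; ring, dp]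
    ring
  have d₂0 : deriv (fun x => H₂n3 x q₂ q₃ p₁ p₂ p₃) q₁ = (2*p₂^2 + 2*p₁*p₃ + q₂*p₃^2 + 2*q₂^2 + 4*q₁*p₂*p₃ + 2*q₁*q₃ + (-3)*q₁^2*q₂) := by
    rw [show (fun x => H₂n3 x q₂ q₃ p₁ p₂ p₃) = (fun y => 0*y^4 + ((-1)*q₂)*y^3 + (2*p₂*p₃ + q₃)*y^2 + (2*p₂^2 + 2*p₁*p₃ + q₂*p₃^2 + 2*q₂^2)*y + (2*p₁*p₂ + (-1)*q₃*p₃^2 + (-2)*q₂*q₃)) from funext fun y => by simp only [H₂n3]; ring, dp]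
    ring
  have d₂1 : deriv (fun x => H₂n3 q₁ x q₃ p₁ p₂ p₃) q₂ = ((-2)*q₃ + q₁*p₃^2 + 4*q₁*q₂ + (-1)*q₁^3) := by
    rw [show (fun x => H₂n3 q₁ x q₃ p₁ p₂ p₃) = (fun y => 0*y^4 + 0*y^3 + (2*q₁)*y^2 + ((-2)*q₃ + q₁*p₃^2 + (-1)*q₁^3)*y + (2*p₁*p₂ + (-1)*q₃*p₃^2 + 2*q₁*p₂^2 + 2*q₁*p₁*p₃ + 2*q₁^2*p₂*p₃ + q₁^2*q₃)) from funext fun y => by simp only [H₂n3]; ring, dp]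
    ring
  have d₂2 : deriv (fun x => H₂n3 q₁ q₂ x p₁ p₂ p₃) q₃ = ((-1)*p₃^2 + (-2)*q₂ + q₁^2) := by
    rw [show (fun x => H₂n3 q₁ q₂ x p₁ p₂ p₃) = (fun y => 0*y^4 + 0*y^3 + 0*y^2 + ((-1)*p₃^2 + (-2)*q₂ + q₁^2)*y + (2*p₁*p₂ + 2*q₁*p₂^2 + 2*q₁*p₁*p₃ + q₁*q₂*p₃^2 + 2*q₁*q₂^2 + 2*q₁^2*p₂*p₃ + (-1)*q₁^3*q₂)) from funext fun y => by simp only [H₂n3]; ring, dp]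
    ring
  have d₂3 : deriv (fun x => H₂n3 q₁ q₂ q₃ x p₂ p₃) p₁ = (2*p₂ + 2*q₁*p₃) := by
    rw [show (fun x => H₂n3 q₁ q₂ q₃ x p₂ p₃) = (fun y => 0*y^4 + 0*y^3 + 0*y^2 + (2*p₂ + 2*q₁*p₃)*y + ((-1)*q₃*p₃^2 + (-2)*q₂*q₃ + 2*q₁*p₂^2 + q₁*q₂*p₃^2 + 2*q₁*q₂^2 + 2*q₁^2*p₂*p₃ + q₁^2*q₃ + (-1)*q₁^3*q₂)) from funext fun y => by simp only [H₂n3]; ring, dp]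
    ring
  have d₂4 : deriv (fun x => H₂n3 q₁ q₂ q₃ p₁ x p₃) p₂ = (2*p₁ + 4*q₁*p₂ + 2*q₁^2*p₃) := by
    rw [show (fun x => H₂n3 q₁ q₂ q₃ p₁ x p₃) = (fun y => 0*y^4 + 0*y^3 + (2*q₁)*y^2 + (2*p₁ + 2*q₁^2*p₃)*y + ((-1)*q₃*p₃^2 + (-2)*q₂*q₃ + 2*q₁*p₁*p₃ + q₁*q₂*p₃^2 + 2*q₁*q₂^2 + q₁^2*q₃ + (-1)*q₁^3*q₂)) from funext fun y => by simp only [H₂n3]; ring, dp]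
    ring
  have d₂5 : deriv (fun x => H₂n3 q₁ q₂ q₃ p₁ p₂ x) p₃ = ((-2)*q₃*p₃ + 2*q₁*p₁ + 2*q₁*q₂*p₃ + 2*q₁^2*p₂) := by
    rw [show (fun x => H₂n3 q₁ q₂ q₃ p₁ p₂ x) = (fun y => 0*y^4 + 0*y^3 + ((-1)*q₃ + q₁*q₂)*y^2 + (2*q₁*p₁ + 2*q₁^2*p₂)*y + (2*p₁*p₂ + (-2)*q₂*q₃ + 2*q₁*p₂^2 + 2*q₁*q₂^2 + q₁^2*q₃ + (-1)*q₁^3*q₂)) from funext fun y => by simp only [H₂n3]; ring, dp]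
    ring
  have d₃0 : deriv (fun x => H₃n3 x q₂ q₃ p₁ p₂ p₃) q₁ = (2*p₁*p₂ + (-1)*q₃*p₃^2 + 2*q₂*p₂*p₃ + 2*q₂*q₃ + 2*q₁*p₂^2 + (-3)*q₁^2*q₃) := by
    rw [show (fun x => H₃n3 x q₂ q₃ p₁ p₂ p₃) = (fun y => 0*y^4 + ((-1)*q₃)*y^3 + (p₂^2)*y^2 + (2*p₁*p₂ + (-1)*q₃*p₃^2 + 2*q₂*p₂*p₃ + 2*q₂*q₃)*y + (p₁^2 + (-2)*q₃*p₂*p₃ + (-1)*q₃^2 + 2*q₂*p₁*p₃ + q₂^2*p₃^2)) from funext fun y => by simp only [H₃n3]; ring, dp]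
    ring
  have d₃1 : deriv (fun x => H₃n3 q₁ x q₃ p₁ p₂ p₃) q₂ = (2*p₁*p₃ + 2*q₂*p₃^2 + 2*q₁*p₂*p₃ + 2*q₁*q₃) := by
    rw [show (fun x => H₃n3 q₁ x q₃ p₁ p₂ p₃) = (fun y => 0*y^4 + 0*y^3 + (p₃^2)*y^2 + (2*p₁*p₃ + 2*q₁*p₂*p₃ + 2*q₁*q₃)*y + (p₁^2 + (-2)*q₃*p₂*p₃ + (-1)*q₃^2 + 2*q₁*p₁*p₂ + (-1)*q₁*q₃*p₃^2 + q₁^2*p₂^2 + (-1)*q₁^3*q₃)) from funext fun y => by simp only [H₃n3]; ring, dp]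
    ring
  have d₃2 : deriv (fun x => H₃n3 q₁ q₂ x p₁ p₂ p₃) q₃ = ((-2)*p₂*p₃ + (-2)*q₃ + (-1)*q₁*p₃^2 + 2*q₁*q₂ + (-1)*q₁^3) := by
    rw [show (fun x => H₃n3 q₁ q₂ x p₁ p₂ p₃) = (fun y => 0*y^4 + 0*y^3 + ((-1))*y^2 + ((-2)*p₂*p₃ + (-1)*q₁*p₃^2 + 2*q₁*q₂ + (-1)*q₁^3)*y + (p₁^2 + 2*q₂*p₁*p₃ + q₂^2*p₃^2 + 2*q₁*p₁*p₂ + 2*q₁*q₂*p₂*p₃ + q₁^2*p₂^2)) from funext fun y => by simp only [H₃n3]; ring, dp]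
    ring
  have d₃3 : deriv (fun x => H₃n3 q₁ q₂ q₃ x p₂ p₃) p₁ = (2*p₁ + 2*q₂*p₃ + 2*q₁*p₂) := by
    rw [show (fun x => H₃n3 q₁ q₂ q₃ x p₂ p₃) = (fun y => 0*y^4 + 0*y^3 + (1)*y^2 + (2*q₂*p₃ + 2*q₁*p₂)*y + ((-2)*q₃*p₂*p₃ + (-1)*q₃^2 + q₂^2*p₃^2 + (-1)*q₁*q₃*p₃^2 + 2*q₁*q₂*p₂*p₃ + 2*q₁*q₂*q₃ + q₁^2*p₂^2 + (-1)*q₁^3*q₃)) from funext fun y => by simp only [H₃n3]; ring, dp]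
    ring
  have d₃4 : deriv (fun x => H₃n3 q₁ q₂ q₃ p₁ x p₃) p₂ = ((-2)*q₃*p₃ + 2*q₁*p₁ + 2*q₁*q₂*p₃ + 2*q₁^2*p₂) := by
    rw [show (fun x => H₃n3 q₁ q₂ q₃ p₁ x p₃) = (fun y => 0*y^4 + 0*y^3 + (q₁^2)*y^2 + ((-2)*q₃*p₃ + 2*q₁*p₁ + 2*q₁*q₂*p₃)*y + (p₁^2 + (-1)*q₃^2 + 2*q₂*p₁*p₃ + q₂^2*p₃^2 + (-1)*q₁*q₃*p₃^2 + 2*q₁*q₂*q₃ + (-1)*q₁^3*q₃)) from funext fun y => by simp only [H₃n3]; ring, dp]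
    ring
  have d₃5 : deriv (fun x => H₃n3 q₁ q₂ q₃ p₁ p₂ x) p₃ = ((-2)*q₃*p₂ + 2*q₂*p₁ + 2*q₂^2*p₃ + (-2)*q₁*q₃*p₃ + 2*q₁*q₂*p₂) := by
    rw [show (fun x => H₃n3 q₁ q₂ q₃ p₁ p₂ x) = (fun y => 0*y^4 + 0*y^3 + (q₂^2 + (-1)*q₁*q₃)*y^2 + ((-2)*q₃*p₂ + 2*q₂*p₁ + 2*q₁*q₂*p₂)*y + (p₁^2 + (-1)*q₃^2 + 2*q₁*p₁*p₂ + 2*q₁*q₂*q₃ + q₁^2*p₂^2 + (-1)*q₁^3*q₃)) from funext fun y => by simp only [H₃n3]; ring, dp]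
    ring
  refine ⟨?_, ?_, ?_⟩ <;> simp only [pb3, d₁0, d₁1, d₁2, d₁3, d₁4, d₁5, d₂0, d₂1, d₂2, d₂3, d₂4, d₂5, d₃0, d₃1, d₃2, d₃3, d₃4, d₃5] <;> ring
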